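/- Let n ≥ 3 and define c₂ = ((n−2)/2)² c₀^{2n/(n−2)} ∫_{ℝⁿ} (|x|²−1) ln(1+|x|²)/(1+|x|²)^{n+1} dx, where c₀ = (n(n−2))^{(n−2)/4}. Then the integral converges and c₂ > 0. -/

import Mathlib

open MeasureTheory

open Set Real Module in
private lemma aux1d (k : ℕ) :
    IntegrableOn (fun y : ℝ => y ^ (k + 2) •
        ((y ^ 2 - 1) * Real.log (1 + y ^ 2) / (1 + y ^ 2) ^ (k + 3 + 1))) (Ioi (0:ℝ)) ∧
    0 < ∫ y in Ioi (0:ℝ), y ^ (k + 2) •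
        ((y ^ 2 - 1) * Real.log (1 + y ^ 2) / (1 + y ^ 2) ^ (k + 3 + 1)) := by
  set g : ℝ → ℝ := fun y => y ^ (k + 2) •
      ((y ^ 2 - 1) * Real.log (1 + y ^ 2) / (1 + y ^ 2) ^ (k + 3 + 1)) with hgdef
  have hlogcont : Continuous fun y : ℝ => Real.log (1 + y ^ 2) :=
    Continuous.log (by fun_prop) fun y => (by positivity : (0:ℝ) < 1 + y ^ 2).ne'
  have hgcont : Continuous g := by
    rw [hgdef]
    apply Continuous.fun_smul (by fun_prop)
    apply Continuous.div ((by fun_prop : Continuous fun y : ℝ => y ^ 2 - 1).mul hlogcont)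
      (by fun_prop)
    intro y; positivity
  -- integrable on (0,1)
  have hint01 : IntegrableOn g (Ioo (0:ℝ) 1) :=
    (hgcont.integrableOn_Icc (a := 0) (b := 1)).mono_set Ioo_subset_Icc_self
  -- integrable on (1,∞)
  have hint1 : IntegrableOn g (Ioi (1:ℝ)) := by
    have hrp : IntegrableOn (fun y : ℝ => y ^ (-((k:ℝ) + 2))) (Ioi (1:ℝ)) :=
      integrableOn_Ioi_rpow_of_lt (by have := Nat.cast_nonneg (α := ℝ) k; linarith) one_pos
    refine hrp.mono' hgcont.aestronglyMeasurable.restrict ?_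
    rw [ae_restrict_iff' measurableSet_Ioi]
    refine ae_of_all _ fun y hy => ?_
    have hy1 : (1:ℝ) < y := hy
    have hy0 : (0:ℝ) < y := lt_trans one_pos hy1
    have hs : (0:ℝ) < 1 + y ^ 2 := by positivity
    have hlog0 : 0 ≤ Real.log (1 + y ^ 2) := Real.log_nonneg (by nlinarith)
    have hlog : Real.log (1 + y ^ 2) ≤ 1 + y ^ 2 :=
      (Real.log_le_sub_one_of_pos hs).trans (by linarith)
    have habs : |y ^ 2 - 1| ≤ 1 + y ^ 2 := by
      rw [abs_le]; constructor <;> nlinarith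
    have key : ‖g y‖ ≤ y ^ (k + 2) * ((1 + y ^ 2) * (1 + y ^ 2) / (1 + y ^ 2) ^ (k + 3 + 1)) := by
      rw [hgdef]
      simp only [smul_eq_mul, norm_mul, norm_pow, Real.norm_eq_abs, abs_of_pos hy0,
        abs_div, abs_mul, abs_of_nonneg hlog0, abs_of_pos (pow_pos hs _)]
      gcongr
    refine key.trans ?_
    have h1 : y ^ (k + 2) * ((1 + y ^ 2) * (1 + y ^ 2) / (1 + y ^ 2) ^ (k + 3 + 1))
        = y ^ (k + 2) / (1 + y ^ 2) ^ (k + 2) := by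
      field_simp; ring
    have h2 : y ^ (-((k:ℝ) + 2)) = y ^ (k + 2) / (y ^ 2) ^ (k + 2) := by
      rw [show ((y:ℝ) ^ 2) ^ (k + 2) = y ^ (k + 2) * y ^ (k + 2) by ring]
      rw [Real.rpow_neg hy0.le, show ((k:ℝ) + 2) = ((k + 2 : ℕ) : ℝ) by push_cast; ring,
        Real.rpow_natCast]
      field_simp
    rw [h1, h2]
    refine div_le_div_of_nonneg_left (pow_nonneg hy0.le _) (pow_pos (by positivity) _) ?_
    exact pow_le_pow_left₀ (by positivity) (by nlinarith) _
  have hintIci : IntegrableOn g (Ici (1:ℝ)) := by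
    rwa [integrableOn_Ici_iff_integrableOn_Ioi]
  -- split
  have hsplit : IntegrableOn g (Ioi (0:ℝ)) ∧
      ∫ y in Ioi (0:ℝ), g y = (∫ y in Ioo (0:ℝ) 1, g y) + ∫ y in Ioi (1:ℝ), g y := by
    have hunion : Ioo (0:ℝ) 1 ∪ Ici 1 = Ioi 0 := Ioo_union_Ici_eq_Ioi zero_lt_one
    have hdisj : Disjoint (Ioo (0:ℝ) 1) (Ici 1) := by
      simp [Set.disjoint_left]
    constructor
    · rw [← hunion]; exact hint01.union hintIci
    · rw [← hunion, setIntegral_union hdisj measurableSet_Ici hint01 hintIci,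
        integral_Ici_eq_integral_Ioi]
  -- substitution y = r⁻¹ on (1,∞)
  have himage : (fun r : ℝ => r⁻¹) '' Ioo 0 1 = Ioi 1 := by
    ext x
    constructor
    · rintro ⟨r, ⟨hr0, hr1⟩, rfl⟩
      exact (one_lt_inv₀ hr0).mpr hr1
    · intro hx
      have hx1 : (1:ℝ) < x := hx
      have hx0 : (0:ℝ) < x := lt_trans one_pos hx1
      exact ⟨x⁻¹, ⟨inv_pos.mpr hx0, (inv_lt_one₀ hx0).mpr hx1⟩, inv_inv x⟩
  have hderiv : ∀ r ∈ Ioo (0:ℝ) 1, HasDerivWithinAt (fun r : ℝ => r⁻¹) (-(r^2)⁻¹) (Ioo 0 1) r :=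
    fun r hr => (hasDerivAt_inv hr.1.ne').hasDerivWithinAt
  have hinj : InjOn (fun r : ℝ => r⁻¹) (Ioo 0 1) := fun a _ b _ h => inv_injective h
  have hsub : ∫ y in Ioi (1:ℝ), g y = ∫ r in Ioo (0:ℝ) 1, |(-(r^2)⁻¹)| • g r⁻¹ := by
    rw [← himage, integral_image_eq_integral_abs_deriv_smul measurableSet_Ioo hderiv hinj]
  have hsubint : IntegrableOn (fun r : ℝ => |(-(r^2)⁻¹)| • g r⁻¹) (Ioo (0:ℝ) 1) := by
    rw [← integrableOn_image_iff_integrableOn_abs_deriv_smul measurableSet_Ioo hderiv hinj g,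
      himage]
    exact hint1
  -- pointwise identity on (0,1)
  set h : ℝ → ℝ := fun r => r ^ (k + 2) * ((1 - r ^ 2) * (-2 * Real.log r)) / (1 + r ^ 2) ^ (k + 3 + 1)
    with hhdef
  have hkey : ∀ r ∈ Ioo (0:ℝ) 1, g r + |(-(r^2)⁻¹)| • g r⁻¹ = h r := by
    intro r hr
    obtain ⟨hr0, hr1⟩ := hr
    have hr0' : r ≠ 0 := hr0.ne'
    have hss : (0:ℝ) < 1 + r ^ 2 := by positivity
    have habs : |(-(r^2)⁻¹)| = (r^2)⁻¹ := by
      rw [abs_neg, abs_inv, abs_of_pos (by positivity)]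
    have hloginv : Real.log (1 + (r⁻¹) ^ 2) = Real.log (1 + r ^ 2) - 2 * Real.log r := by
      have h1 : (1:ℝ) + (r⁻¹) ^ 2 = (1 + r ^ 2) / r ^ 2 := by
        field_simp; ring
      rw [h1, Real.log_div hss.ne' (by positivity), Real.log_pow]
      push_cast; ring
    rw [hgdef, hhdef, habs]
    simp only [smul_eq_mul]
    rw [hloginv]
    have h1 : (1:ℝ) + (r⁻¹) ^ 2 = (1 + r ^ 2) / r ^ 2 := by field_simp; ring
    rw [h1]
    simp only [inv_pow, div_pow]
    field_simp
    ring
  -- combine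
  have hcomb : ∫ y in Ioi (0:ℝ), g y = ∫ r in Ioo (0:ℝ) 1, h r := by
    rw [hsplit.2, hsub, ← integral_add hint01 hsubint]
    exact setIntegral_congr_fun measurableSet_Ioo hkey
  have hhint : IntegrableOn h (Ioo (0:ℝ) 1) := by
    exact MeasureTheory.IntegrableOn.congr_fun (hint01.add hsubint) hkey measurableSet_Ioo
  have hpos : 0 < ∫ r in Ioo (0:ℝ) 1, h r := by
    rw [← integral_Ioc_eq_integral_Ioo, ← intervalIntegral.integral_of_le zero_le_one]
    apply intervalIntegral.intervalIntegral_pos_of_pos_on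
    · exact (intervalIntegrable_iff_integrableOn_Ioo_of_le zero_le_one).mpr hhint
    · intro x hx
      obtain ⟨hx0, hx1⟩ := hx
      have hlogneg : Real.log x < 0 := Real.log_neg hx0 hx1
      have h2 : (0:ℝ) < 1 - x ^ 2 := by nlinarith
      rw [hhdef]
      apply div_pos (mul_pos (pow_pos hx0 _) (mul_pos h2 (by linarith))) (by positivity)
    · exact zero_lt_one
  exact ⟨hsplit.1, by rw [hcomb]; exact hpos⟩

open Set Real Module in
theorem stmt_17 (n : ℕ) (hn : 3 ≤ n) :
    let c₀ : ℝ := (n * (n - 2) : ℝ) ^ (((n : ℝ) - 2) / 4)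
    let f : EuclideanSpace ℝ (Fin n) → ℝ :=
      fun x => (‖x‖ ^ 2 - 1) * Real.log (1 + ‖x‖ ^ 2) / (1 + ‖x‖ ^ 2) ^ (n + 1)
    Integrable f ∧
      0 < (((n : ℝ) - 2) / 2) ^ 2 * c₀ ^ ((2 * (n : ℝ)) / ((n : ℝ) - 2)) * ∫ x, f x := by
  intro c₀ f
  obtain ⟨k, rfl⟩ : ∃ k, n = k + 3 := ⟨n - 3, by omega⟩
  have hE3 : Nontrivial (EuclideanSpace ℝ (Fin (k + 3))) := inferInstance
  set F : ℝ → ℝ := fun y => (y ^ 2 - 1) * Real.log (1 + y ^ 2) / (1 + y ^ 2) ^ (k + 3 + 1)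
    with hFdef
  have hfF : ∀ x : EuclideanSpace ℝ (Fin (k + 3)), f x = F ‖x‖ := fun x => rfl
  -- integrability of f
  have hFbound : ∀ y : ℝ, |F y| ≤ ((1:ℝ) + y ^ 2) ^ (-(2 * ((k:ℝ) + 2)) / 2) := by
    intro y
    have hs : (0:ℝ) < 1 + y ^ 2 := by positivity
    have hs1 : (1:ℝ) ≤ 1 + y ^ 2 := by nlinarith
    have h2 : ((1:ℝ) + y ^ 2) ^ (-(2 * ((k:ℝ) + 2)) / 2) = ((1 + y ^ 2) ^ (k + 2 : ℕ))⁻¹ := by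
      rw [show (-(2 * ((k:ℝ) + 2)) / 2) = -((k + 2 : ℕ) : ℝ) by push_cast; ring,
        Real.rpow_neg hs.le, Real.rpow_natCast]
    rw [h2]
    have hlog0 : 0 ≤ Real.log (1 + y ^ 2) := Real.log_nonneg hs1
    have hlog : Real.log (1 + y ^ 2) ≤ 1 + y ^ 2 :=
      (Real.log_le_sub_one_of_pos hs).trans (by linarith)
    have habs : |y ^ 2 - 1| ≤ 1 + y ^ 2 := by rw [abs_le]; constructor <;> nlinarith
    have key : |F y| ≤ (1 + y ^ 2) * (1 + y ^ 2) / (1 + y ^ 2) ^ (k + 3 + 1) := by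
      rw [hFdef]
      simp only
      rw [abs_div, abs_mul, abs_of_nonneg hlog0, abs_of_pos (pow_pos hs _)]
      gcongr
    refine key.trans (le_of_eq ?_)
    field_simp
    ring
  have hfint : Integrable f := by
    have hmain : Integrable fun x : EuclideanSpace ℝ (Fin (k + 3)) => ((1:ℝ) + ‖x‖ ^ 2) ^ (-(2 * ((k:ℝ) + 2)) / 2) := by
      apply integrable_rpow_neg_one_add_norm_sq
      rw [finrank_euclideanSpace_fin]
      push_cast
      linarith
    have hFcont : Continuous F := by
      have hlogcont : Continuous fun y : ℝ => Real.log (1 + y ^ 2) :=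
        Continuous.log (by fun_prop) fun y => (by positivity : (0:ℝ) < 1 + y ^ 2).ne'
      apply Continuous.div ((by fun_prop : Continuous fun y : ℝ => y ^ 2 - 1).mul hlogcont)
        (by fun_prop)
      intro y; positivity
    refine hmain.mono' ((hFcont.comp continuous_norm).aestronglyMeasurable) ?_
    refine ae_of_all _ fun x => ?_
    rw [hfF x]
    exact hFbound ‖x‖
  refine ⟨hfint, ?_⟩
  -- polar coordinates
  have hpolar := integral_fun_norm_addHaar (volume : Measure (EuclideanSpace ℝ (Fin (k + 3)))) F
  rw [finrank_euclideanSpace_fin] at hpolar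
  have hIf : ∫ x, f x = (k + 3 : ℕ) •
      ((volume (Metric.ball (0:EuclideanSpace ℝ (Fin (k + 3))) 1)).toReal • ∫ y in Ioi (0:ℝ), y ^ (k + 3 - 1) • F y) := by
    rw [← measureReal_def, ← hpolar]
  have hIpos : 0 < ∫ x, f x := by
    rw [hIf, nsmul_eq_mul, smul_eq_mul]
    have hV : 0 < (volume (Metric.ball (0:EuclideanSpace ℝ (Fin (k + 3))) 1)).toReal :=
      ENNReal.toReal_pos (Metric.measure_ball_pos volume (0:EuclideanSpace ℝ (Fin (k + 3))) one_pos).ne'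
        measure_ball_lt_top.ne
    have h1d := (aux1d k).2
    have : (k + 3 - 1) = k + 2 := rfl
    rw [this]
    have hpos2 : 0 < ∫ y in Ioi (0:ℝ), y ^ (k + 2) • F y := h1d
    positivity
  have hc₀ : 0 < c₀ := by
    apply Real.rpow_pos_of_pos
    push_cast
    nlinarith [Nat.cast_nonneg (α := ℝ) k]
  have hC : 0 < (((k + 3 : ℕ) : ℝ) - 2) / 2 := by
    push_cast
    nlinarith [Nat.cast_nonneg (α := ℝ) k]
  exact mul_pos (mul_pos (pow_pos hC 2)
    (Real.rpow_pos_of_pos hc₀ _)) hIpos
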